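/- For any simple graph G on n vertices with Laplacian matrix L, the matrix I + L is invertible, and det(I + L) equals the number of spanning rooted forests of G. -/

import Mathlib

/-- A spanning rooted forest of a graph `G`: a spanning acyclic subgraph (given by its
edge set) together with a set of roots containing exactly one root in each tree
(connected component). -/
structure RootedForest {V : Type*} (G : SimpleGraph V) where
  edges : Set (Sym2 V)
  roots : Set V
  edges_sub : edges ⊆ G.edgeSet
  acyclic : (SimpleGraph.fromEdgeSet edges).IsAcyclic
  unique_root : ∀ v : V, ∃! r, r ∈ roots ∧ (SimpleGraph.fromEdgeSet edges).Reachable v r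

open Finset Matrix SimpleGraph SimpleGraph.Walk

namespace MFT
set_option linter.unusedSectionVars false
set_option linter.unusedVariables false


variable {n : ℕ}

/-- One step of the parent function, extended to `Option`. -/
def step (f : Fin n → Option (Fin n)) : Option (Fin n) → Option (Fin n)
  | none => none
  | some i => f i

/-- Orbit of `v` under iterating the parent function. -/
def orb (f : Fin n → Option (Fin n)) (v : Fin n) (m : ℕ) : Option (Fin n) :=
  (step f)^[m] (some v)

/-- A parent function is *good* if every orbit eventually dies. -/
def Good (f : Fin n → Option (Fin n)) : Prop := ∀ v, ∃ m, orb f v m = none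

lemma orb_zero (f : Fin n → Option (Fin n)) (v : Fin n) : orb f v 0 = some v := rfl

lemma orb_succ (f : Fin n → Option (Fin n)) (v : Fin n) (m : ℕ) :
    orb f v (m + 1) = (step f)^[m] (f v) := by
  simp only [orb, Function.iterate_succ_apply]; rfl

lemma orb_succ_some {f : Fin n → Option (Fin n)} {v w : Fin n} (h : f v = some w) (m : ℕ) :
    orb f v (m + 1) = orb f w m := by
  rw [orb_succ, h]; rfl

/-- Death time of a vertex. -/
noncomputable def dth (f : Fin n → Option (Fin n)) (hf : Good f) (v : Fin n) : ℕ :=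
  Nat.find (hf v)

lemma dth_spec (f : Fin n → Option (Fin n)) (hf : Good f) (v : Fin n) :
    orb f v (dth f hf v) = none := Nat.find_spec (hf v)

lemma dth_pos (f : Fin n → Option (Fin n)) (hf : Good f) (v : Fin n) : 0 < dth f hf v := by
  rcases Nat.eq_zero_or_pos (dth f hf v) with h | h
  · exfalso; have := dth_spec f hf v; rw [h, orb_zero] at this; exact Option.some_ne_none _ this
  · exact h

lemma dth_succ {f : Fin n → Option (Fin n)} (hf : Good f) {v w : Fin n} (h : f v = some w) :
    dth f hf v = dth f hf w + 1 := by
  have hle : dth f hf v ≤ dth f hf w + 1 :=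
    Nat.find_le (by rw [orb_succ_some h]; exact dth_spec f hf w)
  have hp := dth_pos f hf v
  have h4 : orb f w (dth f hf v - 1) = none := by
    have hs := dth_spec f hf v
    rwa [show dth f hf v = (dth f hf v - 1) + 1 by omega, orb_succ_some h] at hs
  have hge : dth f hf w ≤ dth f hf v - 1 := Nat.find_le h4
  omega

lemma f_ne_self {f : Fin n → Option (Fin n)} (hf : Good f) {v : Fin n} : f v ≠ some v := by
  intro h
  have := dth_succ hf h
  omega

lemma no_two_cycle {f : Fin n → Option (Fin n)} (hf : Good f) {a b : Fin n}
    (h1 : f a = some b) (h2 : f b = some a) : False := by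
  have := dth_succ hf h1
  have := dth_succ hf h2
  omega

lemma dth_lt {f : Fin n → Option (Fin n)} (hf : Good f) {v w : Fin n} (h : f v = some w) :
    dth f hf w < dth f hf v := by rw [dth_succ hf h]; omega

section Det

variable (G : SimpleGraph (Fin n)) [DecidableRel G.Adj]

/-- Allowed choices at vertex `i` : either `none` (a root) or a neighbour. -/
def choices (i : Fin n) : Finset (Option (Fin n)) :=
  insert none ((G.neighborFinset i).image some)

/-- The row corresponding to a choice. -/
noncomputable def gRow (i : Fin n) : Option (Fin n) → (Fin n → ℝ)
  | none => Pi.single i 1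
  | some j => Pi.single i 1 - Pi.single j 1

/-- The matrix whose rows are selected by a choice function. -/
noncomputable def Mf (f : Fin n → Option (Fin n)) : Matrix (Fin n) (Fin n) ℝ :=
  Matrix.of fun i => gRow i (f i)

/-- The 0/1 matrix of the parent function. -/
noncomputable def Nf (f : Fin n → Option (Fin n)) : Matrix (Fin n) (Fin n) ℝ :=
  Matrix.of fun i j => if f i = some j then 1 else 0

lemma ite_one_comm {α : Type*} [DecidableEq α] (a b : α) :
    (if a = b then (1:ℝ) else 0) = (if b = a then 1 else 0) := by
  by_cases h : a = b
  · subst h; rfl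
  · simp [h, Ne.symm h]

lemma Mf_eq (f : Fin n → Option (Fin n)) : Mf f = 1 - Nf f := by
  ext i j
  cases h : f i with
  | none =>
      simp only [Mf, Matrix.of_apply, gRow, Nf, h, Matrix.sub_apply, Matrix.one_apply,
        Pi.single_apply, reduceCtorEq, if_false, sub_zero]
      rw [ite_one_comm]
  | some w =>
      simp only [Mf, Matrix.of_apply, gRow, Nf, h, Pi.sub_apply, Matrix.sub_apply,
        Matrix.one_apply, Pi.single_apply, Option.some.injEq]
      rw [ite_one_comm j i, ite_one_comm j w]

lemma row_eq (i : Fin n) :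
    (1 + G.lapMatrix ℝ) i = ∑ c ∈ choices G i, gRow i c := by
  have hnone : (none : Option (Fin n)) ∉ (G.neighborFinset i).image some := by simp
  rw [choices, Finset.sum_insert hnone,
    Finset.sum_image (fun a _ b _ h => Option.some_injective _ h)]
  funext k
  simp only [Pi.add_apply, Finset.sum_apply, gRow, Pi.sub_apply]
  rw [Finset.sum_sub_distrib]
  have h1 : ∑ _j ∈ G.neighborFinset i, (Pi.single i (1:ℝ) : Fin n → ℝ) k
      = (G.degree i : ℝ) * (Pi.single i (1:ℝ) : Fin n → ℝ) k := by
    rw [Finset.sum_const, SimpleGraph.card_neighborFinset_eq_degree, nsmul_eq_mul]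
  have h2 : ∑ j ∈ G.neighborFinset i, (Pi.single j (1:ℝ) : Fin n → ℝ) k
      = if G.Adj i k then 1 else 0 := by
    simp only [Pi.single_apply]
    rw [Finset.sum_ite_eq (G.neighborFinset i) k fun _ => (1:ℝ)]
    simp [SimpleGraph.mem_neighborFinset]
  rw [h1, h2]
  simp only [SimpleGraph.lapMatrix, SimpleGraph.degMatrix, Matrix.add_apply, Matrix.sub_apply,
    Matrix.one_apply, Matrix.diagonal_apply, SimpleGraph.adjMatrix_apply, Pi.single_apply]
  by_cases hik : i = k
  · subst hik; simp
  · simp [hik, Ne.symm hik]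

lemma det_eq_sum_choices :
    (1 + G.lapMatrix ℝ).det = ∑ f ∈ Fintype.piFinset (choices G), (Mf f).det := by
  classical
  have h0 : (1 + G.lapMatrix ℝ) = Matrix.of fun i => ∑ c ∈ choices G i, gRow i c := by
    funext i
    exact row_eq G i
  rw [h0]
  exact MultilinearMap.map_sum_finset
    (f := ((Matrix.detRowAlternating :
      AlternatingMap ℝ (Fin n → ℝ) ℝ (Fin n))).toMultilinearMap)
    (g := gRow) (A := choices G)

lemma det_Mf_good {f : Fin n → Option (Fin n)} (hf : Good f) : (Mf f).det = 1 := by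
  classical
  rw [Mf_eq, ← Matrix.det_transpose]
  have hbt : ((1 - Nf f)ᵀ).BlockTriangular (dth f hf) := by
    intro i j hij
    have hne : j ≠ i := by intro h; subst h; omega
    have hfj : f j ≠ some i := by
      intro h
      have := dth_succ hf h
      omega
    simp [Matrix.transpose_apply, Matrix.sub_apply, Matrix.one_apply, Nf, hne, hfj]
  rw [hbt.det]
  apply Finset.prod_eq_one
  intro a _
  have : ((1 - Nf f)ᵀ).toSquareBlock (dth f hf) a = 1 := by
    ext ⟨i, hi⟩ ⟨j, hj⟩
    simp only [Matrix.toSquareBlock_def, Matrix.transpose_apply, Matrix.sub_apply,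
      Matrix.one_apply, Nf, Matrix.of_apply]
    by_cases hij : i = j
    · subst hij
      simp [Subtype.ext_iff, f_ne_self hf]
    · have hfj : f j ≠ some i := by
        intro h
        have := dth_succ hf h
        rw [hi, hj] at this
        omega
      simp [hij, Ne.symm hij, hfj, Subtype.ext_iff]
  rw [this, Matrix.det_one]

lemma det_Mf_bad {f : Fin n → Option (Fin n)} (hf : ¬ Good f) : (Mf f).det = 0 := by
  classical
  rw [Good] at hf
  push_neg at hf
  obtain ⟨v, hv⟩ := hf
  have hsome : ∀ m, (orb f v m).isSome := fun m => Option.ne_none_iff_isSome.mp (hv m)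
  set o : ℕ → Fin n := fun m => (orb f v m).get (hsome m) with ho_def
  have ho : ∀ m, some (o m) = orb f v m := fun m => Option.some_get (hsome m)
  have hstep : ∀ m, f (o m) = some (o (m + 1)) := by
    intro m
    have h1 : orb f v (m + 1) = step f (orb f v m) := Function.iterate_succ_apply' _ _ _
    rw [← ho m, ← ho (m + 1)] at h1
    exact h1.symm
  obtain ⟨m, m', hne, heq⟩ := Finite.exists_ne_map_eq_of_infinite o
  wlog hlt : m < m' generalizing m m'
  · exact this m' m (Ne.symm hne) heq.symm (by omega)
  set P : ℕ → Fin n → ℝ := fun k => Pi.single (o k) (1:ℝ) with hP_def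
  set w : Fin n → ℝ := ∑ k ∈ Finset.Ico m m', P k with hw_def
  have h2 : ∀ i, w i = ∑ k ∈ Finset.Ico m m', (if i = o k then (1:ℝ) else 0) := by
    intro i
    rw [hw_def, Finset.sum_apply]
    refine Finset.sum_congr rfl fun k _ => ?_
    rw [hP_def]
    simp [Pi.single_apply]
  have hw0 : w ≠ 0 := by
    intro h
    have h1 : w (o m) = 0 := by rw [h]; rfl
    rw [h2] at h1
    have h3 : (1:ℝ) ≤ ∑ k ∈ Finset.Ico m m', (if o m = o k then (1:ℝ) else 0) := by
      have hmem : m ∈ Finset.Ico m m' := by simp [hlt]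
      calc (1:ℝ) = (if o m = o m then (1:ℝ) else 0) := by simp
        _ ≤ _ := Finset.single_le_sum (f := fun k => if o m = o k then (1:ℝ) else 0) (fun k _ => by split_ifs <;> norm_num) hmem
    rw [h1] at h3
    linarith
  have hvm : Matrix.vecMul w (Mf f) = 0 := by
    funext j
    have hrow : ∀ k : ℕ, (fun x => Mf f (o k) x) = fun x => P k x - P (k+1) x := by
      intro k
      have : Mf f (o k) = gRow (o k) (f (o k)) := rfl
      rw [this, hstep k, hP_def]
      rfl
    calc Matrix.vecMul w (Mf f) j = ∑ i, w i * Mf f i j := by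
          simp [Matrix.vecMul, dotProduct]
      _ = ∑ i, ∑ k ∈ Finset.Ico m m', (if i = o k then (1:ℝ) else 0) * Mf f i j := by
          simp_rw [h2, Finset.sum_mul]
      _ = ∑ k ∈ Finset.Ico m m', ∑ i, (if i = o k then (1:ℝ) else 0) * Mf f i j :=
          Finset.sum_comm
      _ = ∑ k ∈ Finset.Ico m m', Mf f (o k) j := by
          refine Finset.sum_congr rfl fun k _ => ?_
          simp only [ite_mul, one_mul, zero_mul]
          rw [Finset.sum_ite_eq' Finset.univ (o k) fun i => Mf f i j]
          simp
      _ = ∑ k ∈ Finset.Ico m m', (P k j - P (k+1) j) := by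
          refine Finset.sum_congr rfl fun k _ => ?_
          exact congrFun (hrow k) j
      _ = P m j - P m' j := by
          rw [Finset.sum_Ico_eq_sum_range]
          have ht := Finset.sum_range_sub' (fun i => P (m + i) j) (m' - m)
          simp only [← Nat.add_assoc, Nat.add_zero] at ht
          rw [ht, show m + (m' - m) = m' by omega]
      _ = 0 := by rw [hP_def]; simp only []; rw [heq]; ring
  exact Matrix.exists_vecMul_eq_zero_iff.mp ⟨w, hw0, hvm⟩

end Det

section Forest

variable (G : SimpleGraph (Fin n)) [DecidableRel G.Adj]

/-- The edge set associated to a parent function. -/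
def edgesOf (f : Fin n → Option (Fin n)) : Set (Sym2 (Fin n)) :=
  {e | ∃ i j, f i = some j ∧ e = s(i, j)}

/-- The root set associated to a parent function. -/
def rootsOf (f : Fin n → Option (Fin n)) : Set (Fin n) := {i | f i = none}

/-- The forest graph associated to a parent function. -/
abbrev Hgraph (f : Fin n → Option (Fin n)) : SimpleGraph (Fin n) :=
  SimpleGraph.fromEdgeSet (edgesOf f)

/-- Allowed parent functions: each vertex maps to `none` or to a neighbour. -/
def Allowed (f : Fin n → Option (Fin n)) : Prop := ∀ i, f i ∈ choices G i

variable {G}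

lemma Allowed.adj {f : Fin n → Option (Fin n)} (hall : Allowed G f) {i j : Fin n}
    (h : f i = some j) : G.Adj i j := by
  have := hall i
  rw [choices, Finset.mem_insert, h] at this
  rcases this with h' | h'
  · exact absurd h' (by simp)
  · obtain ⟨a, ha, haj⟩ := Finset.mem_image.mp h'
    rw [Option.some_injective _ haj] at ha
    exact (SimpleGraph.mem_neighborFinset _ _ _).mp ha

lemma adj_iff {f : Fin n → Option (Fin n)} (hall : Allowed G f) {a b : Fin n} :
    (Hgraph f).Adj a b ↔ f a = some b ∨ f b = some a := by
  constructor
  · intro h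
    rw [SimpleGraph.fromEdgeSet_adj] at h
    obtain ⟨⟨i, j, hij, hedge⟩, hne⟩ := h
    rw [Sym2.eq_iff] at hedge
    rcases hedge with ⟨ha, hb⟩ | ⟨ha, hb⟩
    · left; rw [← ha, ← hb] at hij; exact hij
    · right; rw [← ha, ← hb] at hij; exact hij
  · intro h
    rw [SimpleGraph.fromEdgeSet_adj]
    rcases h with h | h
    · exact ⟨⟨a, b, h, rfl⟩, (hall.adj h).ne⟩
    · exact ⟨⟨b, a, h, Sym2.eq_swap.symm⟩, (hall.adj h).ne.symm⟩

/-- Root of a vertex, computed with fuel. -/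
def rtAux (f : Fin n → Option (Fin n)) : ℕ → Fin n → Fin n
  | 0, v => v
  | m + 1, v => match f v with
    | none => v
    | some w => rtAux f m w

lemma rtAux_none {f : Fin n → Option (Fin n)} {v : Fin n} (h : f v = none) (m : ℕ) :
    rtAux f m v = v := by cases m <;> simp [rtAux, h]

lemma rtAux_succ {f : Fin n → Option (Fin n)} {v w : Fin n} (h : f v = some w) (m : ℕ) :
    rtAux f (m + 1) v = rtAux f m w := by simp [rtAux, h]

/-- The root of a vertex under a good parent function. -/
noncomputable def rt (f : Fin n → Option (Fin n)) (hf : Good f) (v : Fin n) : Fin n :=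
  rtAux f (dth f hf v) v

lemma rt_none {f : Fin n → Option (Fin n)} (hf : Good f) {v : Fin n} (h : f v = none) :
    rt f hf v = v := rtAux_none h _

lemma rt_succ {f : Fin n → Option (Fin n)} (hf : Good f) {v w : Fin n} (h : f v = some w) :
    rt f hf v = rt f hf w := by
  rw [rt, dth_succ hf h, rtAux_succ h]; rfl

lemma rt_spec {f : Fin n → Option (Fin n)} (hf : Good f) (v : Fin n) : f (rt f hf v) = none := by
  have key : ∀ k v, dth f hf v ≤ k → f (rt f hf v) = none := by
    intro k
    induction k with
    | zero => intro v hv; have := dth_pos f hf v; omega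
    | succ k IH =>
      intro v hv
      cases h : f v with
      | none => rw [rt_none hf h]; exact h
      | some w =>
        rw [rt_succ hf h]
        exact IH w (by have := dth_succ hf h; omega)
  exact key _ v le_rfl

lemma reach_rt {f : Fin n → Option (Fin n)} (hall : Allowed G f) (hf : Good f) (v : Fin n) :
    (Hgraph f).Reachable v (rt f hf v) := by
  have key : ∀ k v, dth f hf v ≤ k → (Hgraph f).Reachable v (rt f hf v) := by
    intro k
    induction k with
    | zero => intro v hv; have := dth_pos f hf v; omega
    | succ k IH =>
      intro v hv
      cases h : f v with
      | none => rw [rt_none hf h]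
      | some w =>
        rw [rt_succ hf h]
        have hadj : (Hgraph f).Adj v w := (adj_iff hall).mpr (Or.inl h)
        exact hadj.reachable.trans (IH w (by have := dth_succ hf h; omega))
  exact key _ v le_rfl

lemma rt_eq_of_adj {f : Fin n → Option (Fin n)} (hall : Allowed G f) (hf : Good f)
    {a b : Fin n} (h : (Hgraph f).Adj a b) : rt f hf a = rt f hf b := by
  rcases (adj_iff hall).mp h with h' | h'
  · exact rt_succ hf h'
  · exact (rt_succ hf h').symm

lemma rt_eq_of_reachable {f : Fin n → Option (Fin n)} (hall : Allowed G f) (hf : Good f)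
    {a b : Fin n} (h : (Hgraph f).Reachable a b) : rt f hf a = rt f hf b := by
  obtain ⟨p⟩ := h
  induction p with
  | nil => rfl
  | cons hadj p IH => exact (rt_eq_of_adj hall hf hadj).trans IH

lemma mem_rootsOf {f : Fin n → Option (Fin n)} {v : Fin n} :
    v ∈ rootsOf f ↔ f v = none := Iff.rfl

/-- The forest graph of a good parent function is acyclic. -/
lemma acyclic_Hgraph {f : Fin n → Option (Fin n)} (hall : Allowed G f) (hf : Good f) :
    (Hgraph f).IsAcyclic := by
  intro u c hc
  -- choose a vertex of maximal death time on the cycle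
  obtain ⟨x, hxmem', hxmax'⟩ := Finset.exists_max_image c.support.toFinset (dth f hf)
    ⟨u, by simp [c.start_mem_support]⟩
  have hxmem : x ∈ c.support := by simpa using hxmem'
  have hxmax : ∀ y ∈ c.support, dth f hf y ≤ dth f hf x := by
    intro y hy; exact hxmax' y (by simpa using hy)
  set c' := c.rotate x hxmem with hc'def
  have hc' : c'.IsCycle := hc.rotate hxmem
  have hsub : ∀ y ∈ c'.support, y ∈ c.support := by
    intro y hy
    rw [Walk.support_eq_cons] at hy
    rcases List.mem_cons.mp hy with h | h
    · rw [h]; exact hxmem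
    · have := (Walk.support_rotate c x hxmem).mem_iff.mp h
      exact List.mem_of_mem_tail this
  have horient : ∀ z, z ∈ c'.support → (Hgraph f).Adj x z → f x = some z := by
    intro z hz hadj
    rcases (adj_iff hall).mp hadj with h | h
    · exact h
    · exfalso
      have h1 := dth_succ hf h
      have h2 := hxmax z (hsub z hz)
      omega
  have hnn : ¬ c'.Nil := hc'.not_nil
  set y := c'.getVert 1 with hydef
  have hadjxy : (Hgraph f).Adj x y := Walk.adj_snd hnn
  have hcons : Walk.cons (Walk.adj_snd hnn) c'.tail = c' := Walk.cons_tail_eq c' hnn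
  set q := c'.tail with hqdef
  have hqlen : q.length + 1 = c'.length := Walk.length_tail_add_one hnn
  have hlen3 : 3 ≤ c'.length := hc'.three_le_length
  have hqnn : ¬ q.Nil := by
    rw [Walk.nil_iff_length_eq]; omega
  have hqrnn : ¬ q.reverse.Nil := by
    rw [Walk.nil_iff_length_eq, Walk.length_reverse]
    rw [Walk.nil_iff_length_eq] at hqnn
    exact hqnn
  set z := q.reverse.getVert 1 with hzdef
  have hadjxz : (Hgraph f).Adj x z := Walk.adj_snd hqrnn
  have hqsub : ∀ a, a ∈ q.support → a ∈ c'.support := by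
    intro a ha
    rw [← hcons, Walk.support_cons]
    exact List.mem_cons_of_mem _ ha
  have hymem : y ∈ c'.support := by
    rw [SimpleGraph.Walk.mem_support_iff_exists_getVert]
    exact ⟨1, rfl, by omega⟩
  have hzmem : z ∈ c'.support := by
    apply hqsub
    have : z ∈ q.reverse.support := by
      rw [SimpleGraph.Walk.mem_support_iff_exists_getVert]
      exact ⟨1, rfl, by rw [SimpleGraph.Walk.length_reverse]; omega⟩
    rwa [Walk.support_reverse, List.mem_reverse] at this
  have hfy : f x = some y := horient y hymem hadjxy
  have hfz : f x = some z := horient z hzmem hadjxz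
  have hyz : y = z := by
    have := hfy.symm.trans hfz
    exact Option.some_injective _ this
  -- contradiction with edge-nodup
  have hnodup : c'.edges.Nodup := hc'.isCircuit.isTrail.edges_nodup
  have hedges : c'.edges = s(x, y) :: q.edges := by
    conv_lhs => rw [← hcons]
    rfl
  rw [hedges] at hnodup
  have hnotmem : s(x, y) ∉ q.edges := (List.nodup_cons.mp hnodup).1
  apply hnotmem
  have hconsr : Walk.cons (Walk.adj_snd hqrnn) q.reverse.tail = q.reverse :=
    Walk.cons_tail_eq q.reverse hqrnn
  have : s(x, z) ∈ q.reverse.edges := by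
    rw [← hconsr, Walk.edges_cons]
    exact List.mem_cons_self
  rw [Walk.edges_reverse, List.mem_reverse] at this
  rw [hyz]
  exact this

/-- The rooted forest associated to a good allowed parent function. -/
noncomputable def Phi (f : Fin n → Option (Fin n)) (hall : Allowed G f) (hf : Good f) :
    RootedForest G where
  edges := edgesOf f
  roots := rootsOf f
  edges_sub := by
    rintro e ⟨i, j, hij, rfl⟩
    exact (SimpleGraph.mem_edgeSet G).mpr (hall.adj hij)
  acyclic := acyclic_Hgraph hall hf
  unique_root := by
    intro v
    refine ⟨rt f hf v, ⟨rt_spec hf v, reach_rt hall hf v⟩, ?_⟩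
    rintro r ⟨hr, hreach⟩
    have h1 := rt_eq_of_reachable hall hf hreach
    rw [rt_none hf hr] at h1
    exact h1.symm


section Psi

variable (F : RootedForest G)

/-- The forest graph of a rooted forest. -/
abbrev HF : SimpleGraph (Fin n) := SimpleGraph.fromEdgeSet F.edges

/-- The root of a vertex in a rooted forest. -/
noncomputable def rootF (v : Fin n) : Fin n := (F.unique_root v).exists.choose

lemma rootF_spec (v : Fin n) :
    rootF F v ∈ F.roots ∧ (HF F).Reachable v (rootF F v) :=
  (F.unique_root v).exists.choose_spec

lemma rootF_unique {v r : Fin n} (hr : r ∈ F.roots) (h : (HF F).Reachable v r) :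
    r = rootF F v :=
  (F.unique_root v).unique ⟨hr, h⟩ (rootF_spec F v)

lemma rootF_root {v : Fin n} (hv : v ∈ F.roots) : rootF F v = v :=
  (rootF_unique F hv (Reachable.refl v)).symm

lemma path_uniqueF {a b : Fin n} (p q : (HF F).Path a b) : p = q :=
  (SimpleGraph.isAcyclic_iff_path_unique.mp F.acyclic) p q

/-- The unique path from a vertex to its root. -/
noncomputable def pathTo (v : Fin n) : (HF F).Path v (rootF F v) :=
  ((rootF_spec F v).2.some).toPath

/-- The parent of a vertex: the next vertex on the path to the root. -/
noncomputable def par (v : Fin n) : Fin n := (pathTo F v).1.getVert 1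

open Classical in
/-- The parent function of a rooted forest. -/
noncomputable def Psi : Fin n → Option (Fin n) :=
  fun v => if v ∈ F.roots then none else some (par F v)

variable {F}

lemma ne_rootF {v : Fin n} (hv : v ∉ F.roots) : v ≠ rootF F v := by
  intro h
  exact hv (h ▸ (rootF_spec F v).1)

lemma pathTo_not_nil {v : Fin n} (hv : v ∉ F.roots) : ¬ (pathTo F v).1.Nil :=
  Walk.not_nil_of_ne (ne_rootF hv)

lemma adj_par {v : Fin n} (hv : v ∉ F.roots) : (HF F).Adj v (par F v) :=
  Walk.adj_snd (pathTo_not_nil hv)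

lemma edge_par {v : Fin n} (hv : v ∉ F.roots) : s(v, par F v) ∈ F.edges :=
  ((SimpleGraph.fromEdgeSet_adj _).mp (adj_par hv)).1

lemma G_adj_par {v : Fin n} (hv : v ∉ F.roots) : G.Adj v (par F v) :=
  (SimpleGraph.mem_edgeSet G).mp (F.edges_sub (edge_par hv))

lemma allowed_Psi : Allowed G (Psi F) := by
  intro i
  rw [Psi, choices]
  split_ifs with h
  · exact Finset.mem_insert_self _ _
  · refine Finset.mem_insert_of_mem (Finset.mem_image.mpr ⟨par F i, ?_, rfl⟩)
    exact (SimpleGraph.mem_neighborFinset _ _ _).mpr (G_adj_par h)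

lemma rootF_par {v : Fin n} (hv : v ∉ F.roots) : rootF F (par F v) = rootF F v := by
  have hq : (HF F).Reachable (par F v) (rootF F v) := ⟨(pathTo F v).1.tail⟩
  exact (rootF_unique F (rootF_spec F v).1 hq).symm

lemma pathTo_par {v : Fin n} (hv : v ∉ F.roots) :
    (pathTo F (par F v)).1.length + 1 = (pathTo F v).1.length := by
  have hq : ((pathTo F v).1.tail).IsPath := (pathTo F v).2.tail
  have hpar : (pathTo F v).1.snd = par F v := rfl
  set q' : (HF F).Walk (par F v) (rootF F (par F v)) :=
    ((pathTo F v).1.tail).copy hpar (rootF_par hv).symm with hq'def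
  have hq'path : q'.IsPath := by
    rw [hq'def, Walk.isPath_copy]
    exact hq
  have := path_uniqueF F (pathTo F (par F v)) ⟨q', hq'path⟩
  have hlen : (pathTo F (par F v)).1.length = q'.length := by rw [this]
  rw [hlen, hq'def, Walk.length_copy]
  exact Walk.length_tail_add_one (pathTo_not_nil hv)

lemma good_Psi : Good (Psi F) := by
  have hroot_step : ∀ v, v ∈ F.roots → orb (Psi F) v 1 = none := by
    intro v hv
    show step (Psi F) (some v) = none
    show Psi F v = none
    rw [Psi, if_pos hv]
  have key : ∀ k v, (pathTo F v).1.length ≤ k → ∃ m, orb (Psi F) v m = none := by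
    intro k
    induction k with
    | zero =>
      intro v hvlen
      have h0 : (pathTo F v).1.length = 0 := by omega
      have : v = rootF F v := Walk.eq_of_length_eq_zero h0
      have hv : v ∈ F.roots := this ▸ (rootF_spec F v).1
      exact ⟨1, hroot_step v hv⟩
    | succ k IH =>
      intro v hvlen
      by_cases hv : v ∈ F.roots
      · exact ⟨1, hroot_step v hv⟩
      · have hstep : Psi F v = some (par F v) := by rw [Psi, if_neg hv]
        have hlen : (pathTo F (par F v)).1.length ≤ k := by
          have := pathTo_par hv
          omega
        obtain ⟨m, hm⟩ := IH (par F v) hlen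
        exact ⟨m + 1, by rw [orb_succ_some hstep]; exact hm⟩
  intro v
  exact key _ v le_rfl

end Psi

section Roundtrip

lemma exists_orbit_path {f : Fin n → Option (Fin n)} (hall : Allowed G f) (hf : Good f) :
    ∀ k v, dth f hf v ≤ k → ∃ p : (Hgraph f).Walk v (rt f hf v), p.IsPath ∧
      (∀ u ∈ p.support, dth f hf u ≤ dth f hf v) ∧
      (∀ w, f v = some w → p.getVert 1 = w) := by
  intro k
  induction k with
  | zero => intro v hv; have := dth_pos f hf v; omega
  | succ k IH =>
    intro v hv
    cases h : f v with
    | none =>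
      refine ⟨(Walk.nil : (Hgraph f).Walk v v).copy rfl (rt_none hf h).symm, ?_, ?_, ?_⟩
      · rw [Walk.isPath_copy]; exact Walk.IsPath.nil
      · intro u hu
        rw [Walk.support_copy, Walk.support_nil] at hu
        rw [List.mem_singleton.mp hu]
      · intro w hw; exact absurd hw (by simp)
    | some w =>
      have hdw : dth f hf w ≤ k := by have := dth_succ hf h; omega
      obtain ⟨q, hqpath, hqsupp, _⟩ := IH w hdw
      have hadj : (Hgraph f).Adj v w := (adj_iff hall).mpr (Or.inl h)
      set q' := q.copy rfl (rt_succ hf h).symm with hq'def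
      have hq'path : q'.IsPath := by rw [hq'def, Walk.isPath_copy]; exact hqpath
      have hvnot : v ∉ q'.support := by
        intro hvmem
        rw [hq'def, Walk.support_copy] at hvmem
        have := hqsupp v hvmem
        have := dth_succ hf h
        omega
      refine ⟨Walk.cons hadj q', hq'path.cons hvnot, ?_, ?_⟩
      · intro u hu
        rw [Walk.support_cons] at hu
        rcases List.mem_cons.mp hu with h' | h'
        · rw [h']
        · rw [hq'def, Walk.support_copy] at h'
          have := hqsupp u h'
          have := dth_succ hf h
          omega
      · intro w' hw'
        rw [Walk.getVert_cons_succ, Walk.getVert_zero]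
        exact Option.some_injective _ hw'

lemma PsiPhi {f : Fin n → Option (Fin n)} (hall : Allowed G f) (hf : Good f) :
    Psi (Phi f hall hf) = f := by
  classical
  set F' := Phi f hall hf with hF'
  funext v
  have hroots : ∀ u, u ∈ F'.roots ↔ f u = none := fun u => Iff.rfl
  cases h : f v with
  | none =>
    rw [Psi, if_pos ((hroots v).mpr h)]
  | some w =>
    have hvnot : v ∉ F'.roots := by rw [hroots, h]; simp
    rw [Psi, if_neg hvnot]
    congr 1
    -- par F' v = w
    have hrt_root : rt f hf v ∈ F'.roots := (hroots _).mpr (rt_spec hf v)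
    have hrteq : rt f hf v = rootF F' v := rootF_unique F' hrt_root (reach_rt hall hf v)
    obtain ⟨p, hpath, _, hget⟩ := exists_orbit_path hall hf (dth f hf v) v le_rfl
    set p' := p.copy rfl hrteq with hp'def
    have hp'path : p'.IsPath := by rw [hp'def, Walk.isPath_copy]; exact hpath
    have huniq := path_uniqueF F' (pathTo F' v) ⟨p', hp'path⟩
    have hval : (pathTo F' v).1 = p' := congrArg Subtype.val huniq
    have : par F' v = p'.getVert 1 := by
      rw [par, hval]; rfl
    rw [this, hp'def, Walk.getVert_copy]
    exact hget w h

lemma rootsOf_Psi (F : RootedForest G) : rootsOf (Psi F) = F.roots := by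
  classical
  ext v
  rw [mem_rootsOf, Psi]
  split_ifs with h
  · simp [h]
  · simp [h]

lemma par_eq_of_adj_root {F : RootedForest G} {a b : Fin n} (hadj : (HF F).Adj a b)
    (ha : a ∈ F.roots) : b ∉ F.roots ∧ par F b = a := by
  have hab : a ≠ b := hadj.ne
  have hrab : rootF F b = a := by
    have : (HF F).Reachable b a := hadj.symm.reachable
    exact (rootF_unique F ha this).symm
  have hb : b ∉ F.roots := fun hb => hab (hrab.symm.trans (rootF_root F hb))
  refine ⟨hb, ?_⟩
  set W : (HF F).Walk b a := Walk.cons hadj.symm Walk.nil with hWdef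
  have hWpath : W.IsPath := by
    rw [hWdef]
    refine Walk.IsPath.nil.cons ?_
    rw [Walk.support_nil]
    simp [Ne.symm hab]
  set W' := W.copy rfl hrab.symm with hW'def
  have hW'path : W'.IsPath := by rw [hW'def, Walk.isPath_copy]; exact hWpath
  have huniq := path_uniqueF F (pathTo F b) ⟨W', hW'path⟩
  have hval : (pathTo F b).1 = W' := congrArg Subtype.val huniq
  have : par F b = W'.getVert 1 := by rw [par, hval]
  rw [this, hW'def, Walk.getVert_copy, hWdef, Walk.getVert_cons_succ, Walk.getVert_zero]

lemma edgesOf_Psi (F : RootedForest G) : edgesOf (Psi F) = F.edges := by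
  classical
  ext e
  constructor
  · rintro ⟨i, j, hij, rfl⟩
    have hi : i ∉ F.roots := by
      intro hi
      rw [Psi, if_pos hi] at hij
      exact absurd hij (by simp)
    rw [Psi, if_neg hi] at hij
    rw [← Option.some_injective _ hij]
    exact edge_par hi
  · intro he
    induction e with
    | h a b =>
      have hGadj : G.Adj a b := (SimpleGraph.mem_edgeSet G).mp (F.edges_sub he)
      have hab : a ≠ b := hGadj.ne
      have hadj : (HF F).Adj a b := (SimpleGraph.fromEdgeSet_adj _).mpr ⟨he, hab⟩
      have hroots_eq : rootF F a = rootF F b := by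
        have : (HF F).Reachable a (rootF F b) :=
          hadj.reachable.trans (rootF_spec F b).2
        exact (rootF_unique F (rootF_spec F b).1 this).symm
      have hmem_of : ∀ x y : Fin n, x ∉ F.roots → par F x = y → s(x, y) ∈ edgesOf (Psi F) := by
        intro x y hx hxy
        exact ⟨x, y, by rw [Psi, if_neg hx, hxy], rfl⟩
      by_cases ha : a ∈ F.roots
      · obtain ⟨hb, hpb⟩ := par_eq_of_adj_root hadj ha
        rw [Sym2.eq_swap]
        exact hmem_of b a hb hpb
      · by_cases hpa : par F a = b
        · exact hmem_of a b ha hpa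
        · -- b is not a root
          have hb : b ∉ F.roots := by
            intro hb
            obtain ⟨ha', hpa'⟩ := par_eq_of_adj_root hadj.symm hb
            exact hpa hpa'
          -- b is not on the path from a to the root
          set p := (pathTo F a).1 with hpdef
          have hbnot : b ∉ p.support := by
            intro hbmem
            set q := p.takeUntil b hbmem with hqdef
            have hqpath : q.IsPath := (pathTo F a).2.takeUntil hbmem
            have hspath : (Walk.cons hadj Walk.nil : (HF F).Walk a b).IsPath := by
              refine Walk.IsPath.nil.cons ?_
              rw [Walk.support_nil]
              simp [hab]
            have huniq := path_uniqueF F ⟨q, hqpath⟩ ⟨Walk.cons hadj Walk.nil, hspath⟩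
            have hq_eq : q = Walk.cons hadj Walk.nil := congrArg Subtype.val huniq
            have hspec := p.take_spec hbmem
            rw [← hqdef] at hspec
            rw [hq_eq] at hspec
            have : p.getVert 1 = b := by
              rw [← hspec, Walk.cons_append, Walk.nil_append, Walk.getVert_cons_succ, Walk.getVert_zero]
            exact hpa (by rw [par, ← hpdef]; exact this)
          set W : (HF F).Walk b (rootF F a) := Walk.cons hadj.symm p with hWdef
          have hWpath : W.IsPath := by
            rw [hWdef]
            exact (pathTo F a).2.cons hbnot
          set W' := W.copy rfl hroots_eq with hW'def
          have hW'path : W'.IsPath := by rw [hW'def, Walk.isPath_copy]; exact hWpath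
          have huniq := path_uniqueF F (pathTo F b) ⟨W', hW'path⟩
          have hval : (pathTo F b).1 = W' := congrArg Subtype.val huniq
          have hpb : par F b = a := by
            rw [par, hval, hW'def, Walk.getVert_copy, hWdef, Walk.getVert_cons_succ, Walk.getVert_zero]
          rw [Sym2.eq_swap]
          exact hmem_of b a hb hpb

lemma RootedForest.ext' {F F' : RootedForest G} (he : F.edges = F'.edges)
    (hr : F.roots = F'.roots) : F = F' := by
  cases F
  cases F'
  simp only at he hr
  subst he
  subst hr
  rfl

lemma PhiPsi (F : RootedForest G) : Phi (Psi F) allowed_Psi good_Psi = F :=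
  RootedForest.ext' (edgesOf_Psi F) (rootsOf_Psi F)

end Roundtrip

section Main

variable (G : SimpleGraph (Fin n)) [DecidableRel G.Adj]

open Classical in
lemma det_eq_card :
    (1 + G.lapMatrix ℝ).det
      = (((Fintype.piFinset (choices G)).filter Good).card : ℝ) := by
  rw [det_eq_sum_choices]
  rw [Finset.sum_congr rfl (fun f _ => show (Mf f).det = if Good f then (1:ℝ) else 0 by
    by_cases h : Good f
    · rw [if_pos h, det_Mf_good h]
    · rw [if_neg h, det_Mf_bad h])]
  rw [Finset.sum_boole]

open Classical in
lemma card_forests :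
    Nat.card (RootedForest G) = ((Fintype.piFinset (choices G)).filter Good).card := by
  have key : ∀ x : {f // f ∈ (Fintype.piFinset (choices G)).filter Good},
      Allowed G x.1 ∧ Good x.1 := fun x => by
    have h := Finset.mem_filter.mp x.2
    exact ⟨fun i => (Fintype.mem_piFinset.mp h.1) i, h.2⟩
  let Φ' : {f // f ∈ (Fintype.piFinset (choices G)).filter Good} → RootedForest G :=
    fun x => Phi x.1 (key x).1 (key x).2
  have hbij : Function.Bijective Φ' := by
    rw [Function.bijective_iff_has_inverse]
    refine ⟨fun F => ⟨Psi F, ?_⟩, fun x => ?_, fun F => ?_⟩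
    · exact Finset.mem_filter.mpr
        ⟨Fintype.mem_piFinset.mpr (fun i => allowed_Psi i), good_Psi⟩
    · exact Subtype.ext (PsiPhi (key x).1 (key x).2)
    · exact PhiPsi F
  calc Nat.card (RootedForest G)
      = Nat.card {f // f ∈ (Fintype.piFinset (choices G)).filter Good} :=
        (Nat.card_eq_of_bijective Φ' hbij).symm
    _ = ((Fintype.piFinset (choices G)).filter Good).card :=
        Nat.card_eq_finsetCard _

open Classical in
lemma card_pos : 0 < ((Fintype.piFinset (choices G)).filter Good).card := by
  apply Finset.card_pos.mpr
  refine ⟨fun _ => none, Finset.mem_filter.mpr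
    ⟨Fintype.mem_piFinset.mpr (fun i => Finset.mem_insert_self _ _), fun v => ⟨1, rfl⟩⟩⟩

end Main

end Forest

end MFT

theorem matrix_forest_theorem_det {n : ℕ} (hn : 1 ≤ n) (G : SimpleGraph (Fin n))
    [DecidableRel G.Adj] :
    IsUnit (1 + G.lapMatrix ℝ) ∧
      (1 + G.lapMatrix ℝ).det = (Nat.card (RootedForest G) : ℝ) := by
  have hdet := MFT.det_eq_card G
  have hcard := MFT.card_forests G
  have hpos := MFT.card_pos G
  constructor
  · rw [Matrix.isUnit_iff_isUnit_det, hdet]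
    exact isUnit_iff_ne_zero.mpr (Nat.cast_pos.mpr hpos).ne'
  · rw [hdet, hcard]
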